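/- Let (A, M, P) be a relative averaging algebra and (N → B (map Q), l, r) a bimodule over it. Then B is a representation of the induced diassociative algebra M_P with action maps u ⊣ b = P(u)·b − Q(l(u, b)), u ⊢ b = P(u)·b, b ⊣ u = b·P(u), b ⊢ u = b·P(u) − Q(r(b, u)). -/
import Mathlib


/-- An `A`-bimodule structure on `M` over an associative algebra `A`:
left and right actions that are biadditive and associative/compatible. -/
structure ABimodule (A : Type*) (M : Type*) [Ring A] [AddCommGroup M] where
  lsmul : A → M → M
  rsmul : M → A → M
  lsmul_add : ∀ a u v, lsmul a (u + v) = lsmul a u + lsmul a v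
  add_lsmul : ∀ a b u, lsmul (a + b) u = lsmul a u + lsmul b u
  rsmul_add : ∀ u v a, rsmul (u + v) a = rsmul u a + rsmul v a
  add_rsmul : ∀ u a b, rsmul u (a + b) = rsmul u a + rsmul u b
  mul_lsmul : ∀ a b u, lsmul (a * b) u = lsmul a (lsmul b u)
  rsmul_mul : ∀ u a b, rsmul u (a * b) = rsmul (rsmul u a) b
  lsmul_rsmul : ∀ a u b, rsmul (lsmul a u) b = lsmul a (rsmul u b)

/-- `P : M → A` is a relative averaging operator:
`P(u)·P(v) = P(P(u)·v) = P(u·P(v))`. -/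
def IsRelAvgOp {A M : Type*} [Ring A] [AddCommGroup M]
    (ρ : ABimodule A M) (P : M → A) : Prop :=
  ∀ u v : M, P u * P v = P (ρ.lsmul (P u) v) ∧ P u * P v = P (ρ.rsmul u (P v))

/-- A bimodule `(N → B, l, r)` over a relative averaging algebra `(A, M, P)`. -/
structure RAvgBimodule {A M : Type*} [Ring A] [AddCommGroup M]
    (B N : Type*) [AddCommGroup B] [AddCommGroup N]
    (ρM : ABimodule A M) (P : M → A) where
  ρB : ABimodule A B
  ρN : ABimodule A N
  l : M → B → N
  r : B → M → N
  Q : N → B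
  Q_add : ∀ n n', Q (n + n') = Q n + Q n'
  l_addl : ∀ u u' b, l (u + u') b = l u b + l u' b
  l_addr : ∀ u b b', l u (b + b') = l u b + l u b'
  r_addl : ∀ b b' u, r (b + b') u = r b u + r b' u
  r_addr : ∀ b u u', r b (u + u') = r b u + r b u'
  dasm1a : ∀ a u b, l (ρM.lsmul a u) b = ρN.lsmul a (l u b)
  dasm1b : ∀ u a b, l (ρM.rsmul u a) b = l u (ρB.lsmul a b)
  dasm1c : ∀ u b a, l u (ρB.rsmul b a) = ρN.rsmul (l u b) a
  dasm2a : ∀ a b u, r (ρB.lsmul a b) u = ρN.lsmul a (r b u)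
  dasm2b : ∀ b a u, r (ρB.rsmul b a) u = r b (ρM.lsmul a u)
  dasm2c : ∀ b u a, r b (ρM.rsmul u a) = ρN.rsmul (r b u) a
  dasm3a : ∀ u n, ρB.lsmul (P u) (Q n) = Q (ρN.lsmul (P u) n)
  dasm3b : ∀ u n, ρB.lsmul (P u) (Q n) = Q (l u (Q n))
  dasm4a : ∀ n u, ρB.rsmul (Q n) (P u) = Q (r (Q n) u)
  dasm4b : ∀ n u, ρB.rsmul (Q n) (P u) = Q (ρN.rsmul n (P u))

/-- The fifteen identities making `V` a representation of the diassociative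
algebra `(M, dl, dr)`, with actions `mdl : u ⊣ n`, `mdr : u ⊢ n`,
`ndl : n ⊣ u`, `ndr : n ⊢ u`. -/
def IsDiassRep {M V : Type*} (dl dr : M → M → M)
    (mdl mdr : M → V → V) (ndl ndr : V → M → V) : Prop :=
  ∀ (u v : M) (n : V),
    -- first argument in `V`
    (ndl (ndl n u) v = ndl n (dl u v)) ∧
    (ndl n (dl u v) = ndl n (dr u v)) ∧
    (ndl (ndr n u) v = ndr n (dl u v)) ∧
    (ndr (ndl n u) v = ndr (ndr n u) v) ∧
    (ndr (ndr n u) v = ndr n (dr u v)) ∧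
    -- second argument in `V`
    (ndl (mdl u n) v = mdl u (ndl n v)) ∧
    (mdl u (ndl n v) = mdl u (ndr n v)) ∧
    (ndl (mdr u n) v = mdr u (ndl n v)) ∧
    (ndr (mdl u n) v = ndr (mdr u n) v) ∧
    (ndr (mdr u n) v = mdr u (ndr n v)) ∧
    -- third argument in `V`
    (mdl (dl u v) n = mdl u (mdl v n)) ∧
    (mdl u (mdl v n) = mdl u (mdr v n)) ∧
    (mdl (dr u v) n = mdr u (mdl v n)) ∧
    (mdr (dl u v) n = mdr (dr u v) n) ∧
    (mdr (dr u v) n = mdr u (mdr v n))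

/-- For a bimodule `(N → B, l, r)` over a relative averaging algebra
`(A, M, P)`, the space `B` is a representation of the induced diassociative
algebra `M_P` with `u ⊣ b = P(u)·b − Q(l(u,b))`, `u ⊢ b = P(u)·b`,
`b ⊣ u = b·P(u)`, `b ⊢ u = b·P(u) − Q(r(b,u))`. -/
lemma addhom_sub' {B C : Type*} [AddCommGroup B] [AddCommGroup C]
    (f : B → C) (h : ∀ x y, f (x + y) = f x + f y) (x y : B) :
    f (x - y) = f x - f y := by
  have := h (x - y) y
  rw [sub_add_cancel] at this
  rw [this]; abel

theorem bimodule_gives_diassRep_on_B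
    (A M B N : Type*) [Ring A] [AddCommGroup M] [AddCommGroup B] [AddCommGroup N]
    (ρM : ABimodule A M) (P : M → A) (hP : IsRelAvgOp ρM P)
    (W : RAvgBimodule B N ρM P) :
    IsDiassRep (M := M) (V := B)
      (fun u v => ρM.rsmul u (P v)) (fun u v => ρM.lsmul (P u) v)
      (fun u b => W.ρB.lsmul (P u) b - W.Q (W.l u b)) (fun u b => W.ρB.lsmul (P u) b)
      (fun b u => W.ρB.rsmul b (P u)) (fun b u => W.ρB.rsmul b (P u) - W.Q (W.r b u)) := by
  have hl : ∀ a b : M, P (ρM.lsmul (P a) b) = P a * P b := fun a b => ((hP a b).1).symm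
  have hr : ∀ a b : M, P (ρM.rsmul a (P b)) = P a * P b := fun a b => ((hP a b).2).symm
  have Qsub : ∀ x y, W.Q (x - y) = W.Q x - W.Q y :=
    addhom_sub' _ W.Q_add
  have lssub : ∀ a x y, W.ρB.lsmul a (x - y) = W.ρB.lsmul a x - W.ρB.lsmul a y :=
    fun a => addhom_sub' _ (W.ρB.lsmul_add a)
  have rssub : ∀ x y a, W.ρB.rsmul (x - y) a = W.ρB.rsmul x a - W.ρB.rsmul y a :=
    fun x y a => addhom_sub' (fun z => W.ρB.rsmul z a) (fun p q => W.ρB.rsmul_add p q a) x y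
  have lsub : ∀ u x y, W.l u (x - y) = W.l u x - W.l u y :=
    fun u => addhom_sub' _ (W.l_addr u)
  have rsub : ∀ x y u, W.r (x - y) u = W.r x u - W.r y u :=
    fun x y u => addhom_sub' (fun z => W.r z u) (fun p q => W.r_addl p q u) x y
  intro u v b
  refine ⟨?_, ?_, ?_, ?_, ?_, ?_, ?_, ?_, ?_, ?_, ?_, ?_, ?_, ?_, ?_⟩ <;>
    simp only [Qsub, lssub, rssub, lsub, rsub,
      W.dasm1a, W.dasm1b, W.dasm1c, W.dasm2a, ← W.dasm2b, W.dasm2c,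
      ← W.dasm3a, ← W.dasm3b, ← W.dasm4a, ← W.dasm4b,
      hl, hr, W.ρB.rsmul_mul, W.ρB.mul_lsmul, W.ρB.lsmul_rsmul] <;>
    abel
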